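/- Let M be a rank-r spike (r ≥ 3) defined with C₃ = {C ⊆ S : |C| = r, |C ∩ {x_i,y_i}| = 1 for all i, |C ∩ {x₁,…,x_r}| odd}. Consider the 2^{r−2} pairs (R,B) of disjoint r-sets with y₁ ∈ R, t ∈ B, |R ∩ {x_i,y_i}| = |B ∩ {x_i,y_i}| = 1 for all 2 ≤ i ≤ r, and |R ∩ {x₂,…,x_r}| even. Each such pair is a pair of disjoint bases of M restricted to S − x₁, and every feasible symmetric exchange on such a pair uses at least one of y₁ and t; consequently there is no strictly monotone exchange sequence between any two distinct such pairs. -/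

import Mathlib

open Set Matroid

variable {α : Type*}

/-- `C` is a circuit of `M`: a minimal dependent subset of the ground set. -/
def IsCircuitOf (M : Matroid α) (C : Set α) : Prop :=
  C ⊆ M.E ∧ ¬ M.Indep C ∧ ∀ D, D ⊂ C → M.Indep D

/-- `M` is a rank-`r` spike with tip `t`, legs `{x i, y i}` and extra circuit family
`C3`: the ground set is `{t, x 1, y 1, …, x r, y r}` (all elements distinct), and the
circuits of `M` are exactly the sets `{t, x i, y i}`, the sets `{x i, y i, x j, y j}` for
`i ≠ j`, the members of `C3` (which are transversals of the legs of size `r` avoiding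
`t`), and all `(r + 1)`-element subsets of the ground set containing none of these. -/
structure IsSpike (M : Matroid α) (r : ℕ) (t : α) (x y : Fin r → α)
    (C3 : Set (Set α)) : Prop where
  hr : 3 ≤ r
  inj : Function.Injective fun p : Fin r × Bool => if p.2 then x p.1 else y p.1
  htx : ∀ i, t ≠ x i
  hty : ∀ i, t ≠ y i
  ground : M.E = insert t (⋃ i, {x i, y i})
  hC3 : ∀ C ∈ C3, C ⊆ (⋃ i, {x i, y i}) ∧ C.ncard = r ∧
    ∀ i, (C ∩ {x i, y i}).ncard = 1
  circuits : ∀ C : Set α, IsCircuitOf M C ↔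
    (∃ i, C = {t, x i, y i}) ∨
    (∃ i j, i ≠ j ∧ C = ({x i, y i, x j, y j} : Set α)) ∨
    C ∈ C3 ∨
    (C ⊆ M.E ∧ C.ncard = r + 1 ∧
      (∀ i, ¬ ({t, x i, y i} : Set α) ⊆ C) ∧
      (∀ i j, i ≠ j → ¬ ({x i, y i, x j, y j} : Set α) ⊆ C) ∧
      ∀ C' ∈ C3, ¬ C' ⊆ C)

/-- `SymExchSeq M P L Q` : the list `L` of pairs `(e, f)` records a sequence of feasible
symmetric exchanges transforming the pair of disjoint bases `P` into `Q`. -/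
def SymExchSeq (M : Matroid α) : Set α × Set α → List (α × α) → Set α × Set α → Prop
  | P, [], Q => P = Q
  | P, (e, f) :: L, Q =>
      ∃ P' : Set α × Set α, e ∈ P.1 ∧ f ∈ P.2 ∧
        P'.1 = insert f (P.1 \ {e}) ∧ P'.2 = insert e (P.2 \ {f}) ∧
        M.IsBase P'.1 ∧ M.IsBase P'.2 ∧ SymExchSeq M P' L Q

/-- The total weight of a sequence of symmetric exchanges. -/
def seqWeight (w : α → NNReal) (L : List (α × α)) : NNReal :=
  (L.map fun p => w p.1 + w p.2).sum

/-- The number of times an exchange sequence uses the element `a`. -/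
def usesCount [DecidableEq α] (L : List (α × α)) (a : α) : ℕ :=
  (L.map Prod.fst).count a + (L.map Prod.snd).count a

section AuxSpike
section Aux
variable {r : ℕ} {t : α} {x y : Fin r → α}

lemma aux_xy (inj : Function.Injective fun p : Fin r × Bool => if p.2 then x p.1 else y p.1) :
    ∀ i j, x i ≠ y j := by
  intro i j h
  have := @inj (i, true) (j, false) (by simpa using h)
  simp at this

lemma aux_xinj (inj : Function.Injective fun p : Fin r × Bool => if p.2 then x p.1 else y p.1) :
    Function.Injective x := by
  intro i j h
  have := @inj (i, true) (j, true) (by simpa using h)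
  simpa using this

lemma aux_yinj (inj : Function.Injective fun p : Fin r × Bool => if p.2 then x p.1 else y p.1) :
    Function.Injective y := by
  intro i j h
  have := @inj (i, false) (j, false) (by simpa using h)
  simpa using this

lemma aux_leg (inj : Function.Injective fun p : Fin r × Bool => if p.2 then x p.1 else y p.1)
    {a : α} {i j : Fin r} (hi : a = x i ∨ a = y i) (hj : a = x j ∨ a = y j) : i = j := by
  rcases hi with hi | hi <;> rcases hj with hj | hj <;> subst hi
  · exact aux_xinj inj hj
  · exact absurd hj (aux_xy inj i j)
  · exact absurd hj.symm (aux_xy inj j i)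
  · exact aux_yinj inj hj

variable {d : Fin r → α} (hd : ∀ i, d i = x i ∨ d i = y i)

lemma trans_inj (inj : Function.Injective fun p : Fin r × Bool => if p.2 then x p.1 else y p.1)
    (hd : ∀ i, d i = x i ∨ d i = y i) : Function.Injective d := by
  intro i j h
  exact aux_leg inj (hd i) (h ▸ hd j)

lemma trans_ncard (inj : Function.Injective fun p : Fin r × Bool => if p.2 then x p.1 else y p.1)
    (hd : ∀ i, d i = x i ∨ d i = y i) : (range d).ncard = r := by
  rw [← Set.image_univ, Set.ncard_image_of_injective _ (trans_inj inj hd), Set.ncard_univ]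
  simp

lemma trans_mem (inj : Function.Injective fun p : Fin r × Bool => if p.2 then x p.1 else y p.1)
    (hd : ∀ i, d i = x i ∨ d i = y i) {a : α} {i : Fin r}
    (ha : a ∈ range d) (hi : a = x i ∨ a = y i) : a = d i := by
  obtain ⟨j, rfl⟩ := ha
  rw [aux_leg inj (hd j) hi]

lemma trans_subset (hd : ∀ i, d i = x i ∨ d i = y i) :
    range d ⊆ ⋃ i, {x i, y i} := by
  rintro a ⟨i, rfl⟩
  exact Set.mem_iUnion.mpr ⟨i, by rcases hd i with h | h <;> simp [h]⟩

lemma trans_t (htx : ∀ i, t ≠ x i) (hty : ∀ i, t ≠ y i)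
    (hd : ∀ i, d i = x i ∨ d i = y i) : t ∉ range d := by
  rintro ⟨i, hi⟩
  rcases hd i with h | h
  · exact htx i (by rw [← hi, h])
  · exact hty i (by rw [← hi, h])

lemma trans_leg_inter (inj : Function.Injective fun p : Fin r × Bool => if p.2 then x p.1 else y p.1)
    (hd : ∀ i, d i = x i ∨ d i = y i) (i : Fin r) :
    range d ∩ {x i, y i} = {d i} := by
  ext a
  constructor
  · rintro ⟨ha, hleg⟩
    simp only [Set.mem_insert_iff, Set.mem_singleton_iff] at hleg
    exact trans_mem inj hd ha hleg
  · rintro rfl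
    exact ⟨⟨i, rfl⟩, by rcases hd i with h | h <;> simp [h]⟩

lemma trans_xinter (inj : Function.Injective fun p : Fin r × Bool => if p.2 then x p.1 else y p.1)
    (hd : ∀ i, d i = x i ∨ d i = y i) :
    range d ∩ range x = d '' {i | d i = x i} := by
  ext a
  constructor
  · rintro ⟨⟨j, rfl⟩, ⟨k, hk⟩⟩
    have : j = k := aux_leg inj (hd j) (Or.inl hk.symm)
    exact ⟨j, by rw [Set.mem_setOf_eq, ← hk, this], rfl⟩
  · rintro ⟨j, hj, rfl⟩
    exact ⟨⟨j, rfl⟩, ⟨j, hj.symm⟩⟩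

lemma trans_xinter_ncard
    (inj : Function.Injective fun p : Fin r × Bool => if p.2 then x p.1 else y p.1)
    (hd : ∀ i, d i = x i ∨ d i = y i) :
    (range d ∩ range x).ncard = {i | d i = x i}.ncard := by
  rw [trans_xinter inj hd, Set.ncard_image_of_injective _ (trans_inj inj hd)]

lemma range_update (hinj : Function.Injective d) (j : Fin r) (v : α) :
    range (Function.update d j v) = insert v (range d \ {d j}) := by
  ext a
  simp only [Set.mem_range, Set.mem_insert_iff, Set.mem_diff, Set.mem_singleton_iff]
  constructor
  · rintro ⟨i, rfl⟩
    by_cases h : i = j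
    · subst h; simp
    · rw [Function.update_of_ne h]
      exact Or.inr ⟨⟨i, rfl⟩, fun hh => h (hinj hh)⟩
  · rintro (rfl | ⟨⟨i, rfl⟩, hne⟩)
    · exact ⟨j, by simp⟩
    · exact ⟨i, Function.update_of_ne (fun hh => hne (by rw [hh])) _ _⟩

lemma xset_update_x (j : Fin r) :
    {i | Function.update d j (x j) i = x i} = insert j {i | d i = x i} := by
  ext i
  by_cases h : i = j
  · subst h; simp
  · simp [Function.update_of_ne h, h]

lemma xset_update_y (j : Fin r) (hyx : y j ≠ x j) :
    {i | Function.update d j (y j) i = x i} = {i | d i = x i} \ {j} := by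
  ext i
  by_cases h : i = j
  · subst h; simp [hyx]
  · simp [Function.update_of_ne h, h]

lemma xset_update_parity
    (inj : Function.Injective fun p : Fin r × Bool => if p.2 then x p.1 else y p.1)
    (hd : ∀ i, d i = x i ∨ d i = y i) (j : Fin r) {v : α}
    (hv : v = x j ∨ v = y j) (hne : v ≠ d j) :
    Odd ({i | Function.update d j v i = x i}.ncard) ↔ Even ({i | d i = x i}.ncard) := by
  rcases hv with rfl | rfl
  · have hdj : d j = y j := by
      rcases hd j with h | h
      · exact absurd h.symm hne
      · exact h
    rw [xset_update_x, Set.ncard_insert_of_notMem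
      (by simp only [Set.mem_setOf_eq, hdj]; exact fun h => aux_xy inj j j h.symm) (Set.toFinite _), Nat.odd_add_one,
      Nat.not_odd_iff_even]
  · have hdj : d j = x j := by
      rcases hd j with h | h
      · exact h
      · exact absurd h.symm hne
    have hj : j ∈ {i | d i = x i} := hdj
    rw [xset_update_y j (fun h => aux_xy inj j j h.symm),
      ← Set.ncard_diff_singleton_add_one hj (Set.toFinite _), Nat.even_add_one,
      ← Nat.not_even_iff_odd]

end Aux

section Circ
variable {r : ℕ} {t : α} {x y : Fin r → α} {M : Matroid α} {C3 : Set (Set α)} {d : Fin r → α}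

lemma t_notin_legs (htx : ∀ i, t ≠ x i) (hty : ∀ i, t ≠ y i) :
    t ∉ ⋃ i, ({x i, y i} : Set α) := by
  simp only [Set.mem_iUnion, Set.mem_insert_iff, Set.mem_singleton_iff, not_exists]
  exact fun i h => h.elim (htx i) (hty i)

lemma trans_C3mem (hM : IsSpike M r t x y C3)
    (hC3eq : C3 = {C : Set α | C ⊆ (⋃ i, {x i, y i}) ∧ C.ncard = r ∧
      (∀ i, (C ∩ {x i, y i}).ncard = 1) ∧ Odd ((C ∩ Set.range x).ncard)})
    (hd : ∀ i, d i = x i ∨ d i = y i) (hodd : Odd {i | d i = x i}.ncard) :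
    range d ∈ C3 := by
  rw [hC3eq]
  refine ⟨trans_subset hd, trans_ncard hM.inj hd, fun i => ?_, ?_⟩
  · rw [trans_leg_inter hM.inj hd i]; simp
  · rw [trans_xinter_ncard hM.inj hd]; exact hodd

lemma trans_C3circ (hM : IsSpike M r t x y C3)
    (hC3eq : C3 = {C : Set α | C ⊆ (⋃ i, {x i, y i}) ∧ C.ncard = r ∧
      (∀ i, (C ∩ {x i, y i}).ncard = 1) ∧ Odd ((C ∩ Set.range x).ncard)})
    (hd : ∀ i, d i = x i ∨ d i = y i) (hodd : Odd {i | d i = x i}.ncard) :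
    IsCircuitOf M (range d) :=
  (hM.circuits _).mpr (Or.inr (Or.inr (Or.inl (trans_C3mem hM hC3eq hd hodd))))

lemma circ1 (hM : IsSpike M r t x y C3) (i : Fin r) :
    IsCircuitOf M ({t, x i, y i} : Set α) :=
  (hM.circuits _).mpr (Or.inl ⟨i, rfl⟩)

lemma trans_circ4 (hM : IsSpike M r t x y C3)
    (hC3eq : C3 = {C : Set α | C ⊆ (⋃ i, {x i, y i}) ∧ C.ncard = r ∧
      (∀ i, (C ∩ {x i, y i}).ncard = 1) ∧ Odd ((C ∩ Set.range x).ncard)})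
    (hd : ∀ i, d i = x i ∨ d i = y i) (heven : Even {i | d i = x i}.ncard) :
    IsCircuitOf M (insert t (range d)) := by
  have hleg2 : ∀ i : Fin r, x i ∈ insert t (range d) → y i ∈ insert t (range d) → False := by
    intro i hx hy
    have hx' : x i = d i := by
      rcases hx with hx | hx
      · exact absurd hx.symm (hM.htx i)
      · exact trans_mem hM.inj hd hx (Or.inl rfl)
    have hy' : y i = d i := by
      rcases hy with hy | hy
      · exact absurd hy.symm (hM.hty i)
      · exact trans_mem hM.inj hd hy (Or.inr rfl)
    exact aux_xy hM.inj i i (hx'.trans hy'.symm)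
  rw [hM.circuits]
  refine Or.inr (Or.inr (Or.inr ⟨?_, ?_, ?_, ?_, ?_⟩))
  · rw [hM.ground]
    exact Set.insert_subset_insert (trans_subset hd)
  · rw [Set.ncard_insert_of_notMem (trans_t hM.htx hM.hty hd) (Set.toFinite _),
      trans_ncard hM.inj hd]
  · intro i hsub
    exact hleg2 i (hsub (by simp)) (hsub (by simp))
  · intro i j hij hsub
    exact hleg2 i (hsub (by simp)) (hsub (by simp))
  · intro C' hC' hsub
    rw [hC3eq] at hC'
    obtain ⟨hsub', hcard, hlegs', hoddC⟩ := hC'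
    have hCd : C' ⊆ range d := by
      intro a ha
      rcases hsub ha with rfl | h
      · exact absurd (hsub' ha) (t_notin_legs hM.htx hM.hty)
      · exact h
    have hCeq : C' = range d :=
      Set.eq_of_subset_of_ncard_le hCd
        (by rw [trans_ncard hM.inj hd, hcard]) (Set.toFinite _)
    rw [hCeq, trans_xinter_ncard hM.inj hd] at hoddC
    exact (Nat.not_even_iff_odd.mpr hoddC) heven

end Circ

section Pair
variable {r : ℕ} {t : α} {x y : Fin r → α} {M : Matroid α} {C3 : Set (Set α)}

lemma pair_main (hM : IsSpike M r t x y C3)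
    (hC3eq : C3 = {C : Set α | C ⊆ (⋃ i, {x i, y i}) ∧ C.ncard = r ∧
      (∀ i, (C ∩ {x i, y i}).ncard = 1) ∧ Odd ((C ∩ Set.range x).ncard)})
    (i₀ : Fin r) {R B : Set α}
    (hyR : y i₀ ∈ R) (htB : t ∈ B) (hdisj : Disjoint R B)
    (hunion : R ∪ B = M.E \ {x i₀})
    (hlegs : ∀ i, i ≠ i₀ → (R ∩ {x i, y i}).ncard = 1 ∧ (B ∩ {x i, y i}).ncard = 1)
    (heven : Even ((R ∩ (x '' {i | i ≠ i₀})).ncard)) :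
    (M ↾ (M.E \ {x i₀})).IsBase R ∧ (M ↾ (M.E \ {x i₀})).IsBase B ∧
    ∀ e f : α, e ∈ R → f ∈ B →
      (M ↾ (M.E \ {x i₀})).IsBase (insert f (R \ {e})) →
      (M ↾ (M.E \ {x i₀})).IsBase (insert e (B \ {f})) →
      e = y i₀ ∨ e = t ∨ f = y i₀ ∨ f = t := by
  have inj := hM.inj
  set X := M.E \ {x i₀} with hX
  have hXE : X ⊆ M.E := Set.diff_subset
  have hRX : R ⊆ X := hunion ▸ Set.subset_union_left
  have hBX : B ⊆ X := hunion ▸ Set.subset_union_right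
  have hRE : R ⊆ M.E := hRX.trans hXE
  have hBE : B ⊆ M.E := hBX.trans hXE
  have htR : t ∉ R := fun h => (Set.disjoint_left.mp hdisj h) htB
  have hyB : y i₀ ∉ B := fun h => (Set.disjoint_left.mp hdisj hyR) h
  have hx₀R : x i₀ ∉ R := fun h => (hRX h).2 rfl
  have hx₀B : x i₀ ∉ B := fun h => (hBX h).2 rfl
  -- choose c
  have hcex : ∀ i : Fin r, ∃ a, (i = i₀ → a = y i₀) ∧ (i ≠ i₀ → R ∩ {x i, y i} = {a}) := by
    intro i
    by_cases h : i = i₀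
    · exact ⟨y i₀, fun _ => rfl, fun h' => absurd h h'⟩
    · obtain ⟨a, ha⟩ := Set.ncard_eq_one.mp (hlegs i h).1
      exact ⟨a, fun h' => absurd h' h, fun _ => ha⟩
  choose c hc1 hc2 using hcex
  have hci₀ : c i₀ = y i₀ := hc1 i₀ rfl
  have hcmem : ∀ i, i ≠ i₀ → c i ∈ R ∩ ({x i, y i} : Set α) := by
    intro i h; rw [hc2 i h]; rfl
  have hcleg : ∀ i, c i = x i ∨ c i = y i := by
    intro i
    by_cases h : i = i₀
    · subst h; rw [hci₀]; exact Or.inr rfl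
    · exact (hcmem i h).2
  have hcR : ∀ i, c i ∈ R := by
    intro i
    by_cases h : i = i₀
    · subst h; rw [hci₀]; exact hyR
    · exact (hcmem i h).1
  have hRc : R = range c := by
    apply Set.Subset.antisymm
    · intro a ha
      have haX : a ∈ X := hRX ha
      have : a ∈ insert t (⋃ i, ({x i, y i} : Set α)) := hM.ground ▸ haX.1
      rcases this with rfl | hmem
      · exact absurd ha htR
      · obtain ⟨i, hi⟩ := Set.mem_iUnion.mp hmem
        by_cases h : i = i₀
        · subst h
          rcases hi with rfl | rfl
          · exact absurd rfl (Set.mem_singleton_iff.not.mp (fun hh => haX.2 hh) )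
          · exact ⟨i, hci₀⟩
        · have : a ∈ ({c i} : Set α) := (hc2 i h) ▸ ⟨ha, hi⟩
          exact ⟨i, this.symm⟩
    · rintro a ⟨i, rfl⟩; exact hcR i
  -- choose b
  have hbex : ∀ i : Fin r, ∃ a, (i = i₀ → a = t) ∧ (i ≠ i₀ → B ∩ {x i, y i} = {a}) := by
    intro i
    by_cases h : i = i₀
    · exact ⟨t, fun _ => rfl, fun h' => absurd h h'⟩
    · obtain ⟨a, ha⟩ := Set.ncard_eq_one.mp (hlegs i h).2
      exact ⟨a, fun h' => absurd h' h, fun _ => ha⟩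
  choose b hb1 hb2 using hbex
  have hbi₀ : b i₀ = t := hb1 i₀ rfl
  have hbmem : ∀ i, i ≠ i₀ → b i ∈ B ∩ ({x i, y i} : Set α) := by
    intro i h; rw [hb2 i h]; rfl
  have hbleg : ∀ i, i ≠ i₀ → b i = x i ∨ b i = y i := fun i h => (hbmem i h).2
  have hbB : ∀ i, b i ∈ B := by
    intro i
    by_cases h : i = i₀
    · subst h; rw [hbi₀]; exact htB
    · exact (hbmem i h).1
  have hbinj : Function.Injective b := by
    intro i j h
    by_cases hi : i = i₀ <;> by_cases hj : j = i₀
    · rw [hi, hj]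
    · subst hi; rw [hbi₀] at h
      rcases hbleg j hj with hh | hh
      · exact absurd (h.trans hh) (hM.htx j)
      · exact absurd (h.trans hh) (hM.hty j)
    · subst hj; rw [hbi₀] at h
      rcases hbleg i hi with hh | hh
      · exact absurd (h.symm.trans hh) (hM.htx i)
      · exact absurd (h.symm.trans hh) (hM.hty i)
    · exact aux_leg inj (hbleg i hi) (h ▸ hbleg j hj)
  have hBb : B = range b := by
    apply Set.Subset.antisymm
    · intro a ha
      have haX : a ∈ X := hBX ha
      have : a ∈ insert t (⋃ i, ({x i, y i} : Set α)) := hM.ground ▸ haX.1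
      rcases this with rfl | hmem
      · exact ⟨i₀, hbi₀⟩
      · obtain ⟨i, hi⟩ := Set.mem_iUnion.mp hmem
        by_cases h : i = i₀
        · subst h
          rcases hi with rfl | rfl
          · exact (haX.2 rfl).elim
          · exact absurd ha hyB
        · have : a ∈ ({b i} : Set α) := (hb2 i h) ▸ ⟨ha, hi⟩
          exact ⟨i, this.symm⟩
    · rintro a ⟨i, rfl⟩; exact hbB i
  -- parity of c
  have hxsetc : R ∩ (x '' {i | i ≠ i₀}) = c '' {i | c i = x i} := by
    ext a
    constructor
    · rintro ⟨haR, ⟨n, hn, rfl⟩⟩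
      obtain ⟨m, hm⟩ := hRc ▸ haR
      have hmn : m = n := aux_leg inj (hcleg m) (Or.inl hm)
      exact ⟨m, by rw [Set.mem_setOf_eq, hm, hmn], hm⟩
    · rintro ⟨m, hm, rfl⟩
      have hmne : m ≠ i₀ := by
        intro hmi
        have hm' : c i₀ = x i₀ := hmi ▸ hm
        exact aux_xy inj i₀ i₀ (hm'.symm.trans hci₀)
      exact ⟨hcR m, ⟨m, hmne, hm.symm⟩⟩
  have hScEven : Even ({i | c i = x i}.ncard) := by
    rwa [hxsetc, Set.ncard_image_of_injective _ (trans_inj inj hcleg)] at heven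
  -- circuit R ∪ {t}
  have hcircRt : IsCircuitOf M (insert t R) := by
    rw [hRc]; exact trans_circ4 hM hC3eq hcleg hScEven
  have hIndepR : M.Indep R := hcircRt.2.2 R (Set.ssubset_insert htR)
  -- swap helper
  have hswap : ∀ j, j ≠ i₀ → ∀ v : α, (v = x j ∨ v = y j) → v ∉ R →
      range (Function.update c j v) ∈ C3 ∧
      range (Function.update c j v) = insert v (R \ {c j}) := by
    intro j hj v hv hvR
    have hne : v ≠ c j := fun h => hvR (h ▸ hcR j)
    have hd' : ∀ i, Function.update c j v i = x i ∨ Function.update c j v i = y i := by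
      intro i
      by_cases h : i = j
      · subst h; rw [Function.update_self]; exact hv
      · rw [Function.update_of_ne h]; exact hcleg i
    refine ⟨trans_C3mem hM hC3eq hd'
        ((xset_update_parity inj hcleg j hv hne).mpr hScEven), ?_⟩
    rw [range_update (trans_inj inj hcleg), hRc]
  -- R is a base
  have hBaseR : (M ↾ X).IsBase R := by
    refine (Matroid.isBase_restrict_iff hXE).mpr
      (hIndepR.isBasis_of_forall_insert hRX ?_)
    intro e he
    have heB : e ∈ B := by
      have : e ∈ R ∪ B := hunion ▸ he.1
      exact this.resolve_left he.2
    refine Matroid.dep_iff.mpr ⟨?_, Set.insert_subset (hXE (hBX heB)) hRE⟩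
    obtain ⟨k, rfl⟩ := hBb ▸ heB
    by_cases hk : k = i₀
    · subst hk; rw [hbi₀]; exact hcircRt.2.1
    · obtain ⟨hmemC3, hreq⟩ := hswap k hk (b k) (hbleg k hk) he.2
      intro hind
      have hCsub : range (Function.update c k (b k)) ⊆ insert (b k) R := by
        rw [hreq]; exact Set.insert_subset_insert Set.diff_subset
      exact (trans_C3circ hM hC3eq (fun i => by
        by_cases h : i = k
        · subst h; rw [Function.update_self]; exact hbleg i hk
        · rw [Function.update_of_ne h]; exact hcleg i)
        ((xset_update_parity inj hcleg k (hbleg k hk)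
          (fun h => he.2 (h ▸ hcR k))).mpr hScEven)).2.1 (hind.subset hCsub)
  -- B side
  set d : Fin r → α := Function.update b i₀ (y i₀) with hdDef
  have hdleg : ∀ i, d i = x i ∨ d i = y i := by
    intro i
    by_cases h : i = i₀
    · subst h; rw [hdDef, Function.update_self]; exact Or.inr rfl
    · rw [hdDef, Function.update_of_ne h]; exact hbleg i h
  have hranged : insert t (range d) = insert (y i₀) B := by
    rw [hdDef, range_update hbinj, hbi₀, hBb]
    rw [Set.insert_comm, Set.insert_diff_singleton, Set.insert_eq_self.mpr (show t ∈ range b from ⟨i₀, hbi₀⟩)]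
  have hdsub : range d ⊆ insert (y i₀) B := by
    rw [← hranged]; exact Set.subset_insert _ _
  obtain ⟨hIndepB, hdepy⟩ : M.Indep B ∧ ¬ M.Indep (insert (y i₀) B) := by
    by_cases hpar : Odd ({i | d i = x i}.ncard)
    · constructor
      · -- use B ∪ {x i₀}
        set d' : Fin r → α := Function.update b i₀ (x i₀) with hd'Def
        have hd'leg : ∀ i, d' i = x i ∨ d' i = y i := by
          intro i
          by_cases h : i = i₀
          · subst h; rw [hd'Def, Function.update_self]; exact Or.inl rfl
          · rw [hd'Def, Function.update_of_ne h]; exact hbleg i h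
        have hxeq : {i | d' i = x i} = insert i₀ {i | d i = x i} := by
          ext i
          by_cases h : i = i₀
          · subst h; simp [hd'Def]
          · simp [hd'Def, hdDef, Function.update_of_ne h, h]
        have hi₀d : i₀ ∉ {i | d i = x i} := by
          rw [Set.mem_setOf_eq, hdDef, Function.update_self]
          exact fun h => aux_xy inj i₀ i₀ h.symm
        have heven' : Even ({i | d' i = x i}.ncard) := by
          rw [hxeq, Set.ncard_insert_of_notMem hi₀d (Set.toFinite _)]
          exact hpar.add_one
        have hranged' : insert t (range d') = insert (x i₀) B := by
          rw [hd'Def, range_update hbinj, hbi₀, hBb]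
          rw [Set.insert_comm, Set.insert_diff_singleton, Set.insert_eq_self.mpr (show t ∈ range b from ⟨i₀, hbi₀⟩)]
        have hcirc := trans_circ4 hM hC3eq hd'leg heven'
        rw [hranged'] at hcirc
        exact hcirc.2.2 B (Set.ssubset_insert hx₀B)
      · intro hind
        exact (trans_C3circ hM hC3eq hdleg hpar).2.1 (hind.subset hdsub)
    · rw [Nat.not_odd_iff_even] at hpar
      have hcirc := trans_circ4 hM hC3eq hdleg hpar
      rw [hranged] at hcirc
      exact ⟨hcirc.2.2 B (Set.ssubset_insert hyB), hcirc.2.1⟩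
  have hlegsub : ∀ j, j ≠ i₀ → ∀ Z : Set α, c j ∈ Z → b j ∈ Z →
      ({t, x j, y j} : Set α) ⊆ insert t Z := by
    intro j hj Z hcZ hbZ
    have hcb : c j ≠ b j := fun h =>
      (Set.disjoint_left.mp hdisj (hcR j)) (h ▸ hbB j)
    intro a ha
    rcases ha with rfl | rfl | rfl
    · exact Set.mem_insert _ _
    · rcases hcleg j with h1 | h1
      · exact Set.mem_insert_of_mem _ (h1 ▸ hcZ)
      · rcases hbleg j hj with h2 | h2
        · exact Set.mem_insert_of_mem _ (h2 ▸ hbZ)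
        · exact absurd (h1.trans h2.symm) hcb
    · rcases hcleg j with h1 | h1
      · rcases hbleg j hj with h2 | h2
        · exact absurd (h1.trans h2.symm) hcb
        · exact Set.mem_insert_of_mem _ (h2 ▸ hbZ)
      · exact Set.mem_insert_of_mem _ (h1 ▸ hcZ)
  have hBaseB : (M ↾ X).IsBase B := by
    refine (Matroid.isBase_restrict_iff hXE).mpr
      (hIndepB.isBasis_of_forall_insert hBX ?_)
    intro e he
    have heR : e ∈ R := by
      have : e ∈ R ∪ B := hunion ▸ he.1
      exact this.resolve_right he.2
    refine Matroid.dep_iff.mpr ⟨?_, Set.insert_subset (hXE (hRX heR)) hBE⟩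
    obtain ⟨j, rfl⟩ := hRc ▸ heR
    by_cases hj : j = i₀
    · subst hj; rw [hci₀]; exact hdepy
    · intro hind
      have hsub : ({t, x j, y j} : Set α) ⊆ insert (c j) B := by
        have := hlegsub j hj (insert (c j) B) (Set.mem_insert _ _)
          (Set.mem_insert_of_mem _ (hbB j))
        refine this.trans ?_
        rw [Set.insert_eq_self.mpr (Set.mem_insert_of_mem _ htB)]
      exact (circ1 hM j).2.1 (hind.subset hsub)
  refine ⟨hBaseR, hBaseB, ?_⟩
  intro e f he hf hBase1 hBase2
  by_contra hcon
  push_neg at hcon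
  obtain ⟨hey, het, hfy, hft⟩ := hcon
  obtain ⟨j, rfl⟩ := hRc ▸ he
  have hj : j ≠ i₀ := by
    rintro rfl; exact hey hci₀
  obtain ⟨k, rfl⟩ := hBb ▸ hf
  have hk : k ≠ i₀ := by
    rintro rfl; exact hft hbi₀
  have hInd1 : M.Indep (insert (b k) (R \ {c j})) :=
    (Matroid.restrict_indep_iff.mp hBase1.indep).1
  have hInd2 : M.Indep (insert (c j) (B \ {b k})) :=
    (Matroid.restrict_indep_iff.mp hBase2.indep).1
  by_cases hjk : j = k
  · subst hjk
    have hbR : b j ∉ R := fun h => (Set.disjoint_left.mp hdisj h) (hbB j)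
    obtain ⟨hmemC3, hreq⟩ := hswap j hj (b j) (hbleg j hj) hbR
    rw [← hreq] at hInd1
    exact (trans_C3circ hM hC3eq (fun i => by
      by_cases h : i = j
      · subst h; rw [Function.update_self]; exact hbleg i hj
      · rw [Function.update_of_ne h]; exact hcleg i)
      ((xset_update_parity inj hcleg j (hbleg j hj)
        (fun h => hbR (h ▸ hcR j))).mpr hScEven)).2.1 hInd1
  · have hsub : ({t, x j, y j} : Set α) ⊆ insert (c j) (B \ {b k}) := by
      have hbmem' : b j ∈ B \ {b k} :=
        ⟨hbB j, fun h => hjk (hbinj h)⟩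
      have htmem : t ∈ B \ {b k} :=
        ⟨htB, fun h => hk (hbinj (hbi₀.trans h)).symm⟩
      have := hlegsub j hj (insert (c j) (B \ {b k})) (Set.mem_insert _ _)
        (Set.mem_insert_of_mem _ hbmem')
      refine this.trans ?_
      rw [Set.insert_eq_self.mpr (Set.mem_insert_of_mem _ htmem)]
    exact (circ1 hM j).2.1 (hInd2.subset hsub)

end Pair
end AuxSpike

/-- Let `M` be the rank-`r` spike (`r ≥ 3`) whose extra circuits `C3` are the leg
transversals of size `r` containing an odd number of the `x i`. Consider the pairs
`(R, B)` of disjoint `r`-sets partitioning `S - x 1` with `y 1 ∈ R`, `t ∈ B`,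
`|R ∩ {x i, y i}| = |B ∩ {x i, y i}| = 1` for all `i ≠ 1`, and
`|R ∩ {x 2, …, x r}|` even. Each such pair is a pair of disjoint bases of the
restriction of `M` to `S - x 1`; every feasible symmetric exchange on such a pair uses
at least one of `y 1` and `t`; and consequently there is no strictly monotone exchange
sequence between any two distinct such pairs. -/
theorem stmt18 (M : Matroid α) (r : ℕ) (t : α) (x y : Fin r → α) (C3 : Set (Set α))
    (hM : IsSpike M r t x y C3) (i₀ : Fin r) (hi₀ : (i₀ : ℕ) = 0)
    (hC3 : C3 = {C : Set α | C ⊆ (⋃ i, {x i, y i}) ∧ C.ncard = r ∧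
      (∀ i, (C ∩ {x i, y i}).ncard = 1) ∧ Odd ((C ∩ Set.range x).ncard)})
    (Fam : Set (Set α × Set α))
    (hFam : Fam = {P : Set α × Set α | y i₀ ∈ P.1 ∧ t ∈ P.2 ∧ Disjoint P.1 P.2 ∧
      P.1 ∪ P.2 = M.E \ {x i₀} ∧
      (∀ i, i ≠ i₀ → (P.1 ∩ {x i, y i}).ncard = 1 ∧ (P.2 ∩ {x i, y i}).ncard = 1) ∧
      Even ((P.1 ∩ (x '' {i | i ≠ i₀})).ncard)}) :
    (∀ P ∈ Fam, (M ↾ (M.E \ {x i₀})).IsBase P.1 ∧ (M ↾ (M.E \ {x i₀})).IsBase P.2) ∧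
    (∀ P ∈ Fam, ∀ e f : α, e ∈ P.1 → f ∈ P.2 →
      (M ↾ (M.E \ {x i₀})).IsBase (insert f (P.1 \ {e})) →
      (M ↾ (M.E \ {x i₀})).IsBase (insert e (P.2 \ {f})) →
      e = y i₀ ∨ e = t ∨ f = y i₀ ∨ f = t) ∧
    (∀ P ∈ Fam, ∀ Q ∈ Fam, P ≠ Q →
      ¬ ∃ L : List (α × α), SymExchSeq (M ↾ (M.E \ {x i₀})) P L Q ∧
        (∀ p ∈ L, p.1 ∈ P.1 ∩ Q.2 ∧ p.2 ∈ P.2 ∩ Q.1) ∧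
        (L.map Prod.fst ++ L.map Prod.snd).Nodup) := by
  have hmain : ∀ P ∈ Fam, (M ↾ (M.E \ {x i₀})).IsBase P.1 ∧ (M ↾ (M.E \ {x i₀})).IsBase P.2 ∧
      ∀ e f : α, e ∈ P.1 → f ∈ P.2 →
        (M ↾ (M.E \ {x i₀})).IsBase (insert f (P.1 \ {e})) →
        (M ↾ (M.E \ {x i₀})).IsBase (insert e (P.2 \ {f})) →
        e = y i₀ ∨ e = t ∨ f = y i₀ ∨ f = t := by
    intro P hP
    rw [hFam] at hP
    obtain ⟨hyR, htB, hdisj, hunion, hlegs, heven⟩ := hP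
    exact pair_main hM hC3 i₀ hyR htB hdisj hunion hlegs heven
  refine ⟨fun P hP => ⟨(hmain P hP).1, (hmain P hP).2.1⟩,
    fun P hP => (hmain P hP).2.2, ?_⟩
  rintro P hP Q hQ hne ⟨L, hseq, hmono, -⟩
  have hPf := hP; have hQf := hQ
  rw [hFam] at hPf hQf
  obtain ⟨hyP, htP, hdisjP, -⟩ := hPf
  obtain ⟨hyQ, htQ, hdisjQ, -⟩ := hQf
  cases L with
  | nil => exact hne hseq
  | cons p L' =>
    obtain ⟨e, f⟩ := p
    obtain ⟨P', he, hf, h1, h2, hb1, hb2, -⟩ := hseq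
    rw [h1] at hb1
    rw [h2] at hb2
    have hm := hmono (e, f) (List.mem_cons_self)
    rcases (hmain P hP).2.2 e f he hf hb1 hb2 with rfl | rfl | rfl | rfl
    · exact (Set.disjoint_left.mp hdisjQ hyQ) hm.1.2
    · exact (Set.disjoint_left.mp hdisjP he) htP
    · exact (Set.disjoint_left.mp hdisjP hyP) hf
    · exact (Set.disjoint_left.mp hdisjQ hm.2.2) htQ
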